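/- For every natural number m ≥ 1 and every real number x, one has x^m = (1/(m−1)!) · Σ_{k=1}^{m} A_m^{(k)} · P_{k−1}(x) + ε_m, where ε_m = (−1)^{m/2} if m is even and ε_m = 0 if m is odd. -/

import Mathlib

/-- The derivative polynomials of the tangent function:
`P 0 = X`, `P (n+1) = (1 + X²) · (P n)'`. -/
noncomputable def P : ℕ → Polynomial ℝ
  | 0 => Polynomial.X
  | n + 1 => (1 + Polynomial.X ^ 2) * Polynomial.derivative (P n)

/-- The arctangent numbers `A n k`: the Taylor coefficients (with respect to the
exponential generating function) of `(arctan z)^k / k!`, i.e.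
`(arctan z)^k / k! = Σ_{n ≥ k} A n k · zⁿ/n!`. -/
noncomputable def A (n k : ℕ) : ℝ :=
  iteratedDeriv n (fun z : ℝ => Real.arctan z ^ k / (Nat.factorial k)) 0

open Polynomial

noncomputable def f (k : ℕ) : ℝ → ℝ := fun z => Real.arctan z ^ k / (Nat.factorial k)

lemma A_eq (n k : ℕ) : A n k = iteratedDeriv n (f k) 0 := rfl

lemma f_smooth (k : ℕ) : ContDiff ℝ (↑(⊤:ℕ∞)) (f k) :=
  (Real.contDiff_arctan.pow k).div_const _

lemma f_hasDerivAt (k : ℕ) (z : ℝ) :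
    HasDerivAt (f (k+1)) (f k z / (1 + z^2)) z := by
  have h1 : (0:ℝ) < 1 + z^2 := by positivity
  have h := ((Real.hasDerivAt_arctan z).pow (k+1)).div_const ((Nat.factorial (k+1) : ℝ))
  refine h.congr_deriv ?_
  have hk : (Nat.factorial k : ℝ) ≠ 0 := Nat.cast_ne_zero.mpr (Nat.factorial_ne_zero k)
  simp only [f, Nat.factorial_succ, Nat.add_sub_cancel]
  push_cast
  field_simp

lemma hD (g : ℝ → ℝ) (hg : ContDiff ℝ (↑(⊤:ℕ∞)) g) (m : ℕ) (z : ℝ) :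
    HasDerivAt (iteratedDeriv m g) (iteratedDeriv (m+1) g z) z := by
  have h := (hg.differentiable_iteratedDeriv m (by exact_mod_cast lt_top_iff_ne_top.mpr (WithTop.natCast_ne_top m))) z
  rw [iteratedDeriv_succ]
  exact h.hasDerivAt

lemma one_add_sq_hasDerivAt (z : ℝ) : HasDerivAt (fun w : ℝ => 1 + w^2) (2*z) z := by
  simpa using (hasDerivAt_pow 2 z).const_add 1

lemma hDg (g : ℝ → ℝ) (hg : ContDiff ℝ (↑(⊤:ℕ∞)) g) (z : ℝ) :
    HasDerivAt g (iteratedDeriv 1 g z) z := by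
  simpa using hD g hg 0 z

lemma deriv_F (g : ℝ → ℝ) (hg : ContDiff ℝ (↑(⊤:ℕ∞)) g) :
    deriv (fun w : ℝ => (1+w^2) * g w)
      = fun z => 2*z * g z + (1+z^2) * iteratedDeriv 1 g z := by
  funext z
  exact ((one_add_sq_hasDerivAt z).mul (hDg g hg z)).deriv

lemma leibniz (g : ℝ → ℝ) (hg : ContDiff ℝ (↑(⊤:ℕ∞)) g) (n : ℕ) (z : ℝ) :
    iteratedDeriv (n+2) (fun w : ℝ => (1+w^2) * g w) z =
      (1+z^2) * iteratedDeriv (n+2) g z + 2*((n:ℝ)+2)*z * iteratedDeriv (n+1) g z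
        + ((n:ℝ)+2)*((n:ℝ)+1) * iteratedDeriv n g z := by
  induction n generalizing z with
  | zero =>
    rw [show (0+2 : ℕ) = 1+1 from rfl, iteratedDeriv_succ, iteratedDeriv_one,
      deriv_F g hg]
    have t1 : HasDerivAt (fun w : ℝ => 2*w * g w)
        ((2:ℝ) * g z + 2*z * iteratedDeriv 1 g z) z := by
      have := ((hasDerivAt_id z).const_mul (2:ℝ)).mul (hDg g hg z)
      exact this.congr_deriv (by simp only [id, mul_one])
    have t2 : HasDerivAt (fun w : ℝ => (1+w^2) * iteratedDeriv 1 g w)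
        (2*z * iteratedDeriv 1 g z + (1+z^2) * iteratedDeriv 2 g z) z :=
      (one_add_sq_hasDerivAt z).mul (hD g hg 1 z)
    erw [(t1.add t2).deriv]; rw [iteratedDeriv_zero]
    push_cast
    ring
  | succ n ih =>
    rw [show (n+1+2 : ℕ) = (n+2)+1 from rfl, iteratedDeriv_succ]
    have hfun : iteratedDeriv (n+2) (fun w : ℝ => (1+w^2) * g w)
        = fun z => (1+z^2) * iteratedDeriv (n+2) g z
            + 2*((n:ℝ)+2)*z * iteratedDeriv (n+1) g z
            + ((n:ℝ)+2)*((n:ℝ)+1) * iteratedDeriv n g z := funext fun w => ih w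
    rw [hfun]
    have t1 : HasDerivAt (fun w : ℝ => (1+w^2) * iteratedDeriv (n+2) g w)
        (2*z * iteratedDeriv (n+2) g z + (1+z^2) * iteratedDeriv (n+3) g z) z :=
      (one_add_sq_hasDerivAt z).mul (hD g hg (n+2) z)
    have t2 : HasDerivAt (fun w : ℝ => 2*((n:ℝ)+2)*w * iteratedDeriv (n+1) g w)
        ((2*((n:ℝ)+2)) * iteratedDeriv (n+1) g z
          + 2*((n:ℝ)+2)*z * iteratedDeriv (n+2) g z) z := by
      have := ((hasDerivAt_id z).const_mul (2*((n:ℝ)+2))).mul (hD g hg (n+1) z)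
      exact this.congr_deriv (by simp only [id, mul_one])
    have t3 : HasDerivAt (fun w : ℝ => ((n:ℝ)+2)*((n:ℝ)+1) * iteratedDeriv n g w)
        (((n:ℝ)+2)*((n:ℝ)+1) * iteratedDeriv (n+1) g z) z :=
      (hD g hg n z).const_mul _
    erw [((t1.add t2).add t3).deriv]
    push_cast
    ring

-- the function (1+z^2) * deriv (f (k+1)) equals f k
lemma F_eq (k : ℕ) : (fun z : ℝ => (1+z^2) * deriv (f (k+1)) z) = f k := by
  funext z
  rw [(f_hasDerivAt k z).deriv]
  have h1 : (1:ℝ) + z^2 ≠ 0 := by positivity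
  field_simp

lemma g_smooth (k : ℕ) : ContDiff ℝ (↑(⊤:ℕ∞)) (deriv (f (k+1))) :=
  (contDiff_infty_iff_deriv.mp (f_smooth (k+1))).2

lemma rec0 (k : ℕ) : A 1 (k+1) = A 0 k := by
  rw [A_eq, A_eq, iteratedDeriv_one, iteratedDeriv_zero, (f_hasDerivAt k 0).deriv]
  norm_num

lemma rec1 (k : ℕ) : A 2 (k+1) = A 1 k := by
  rw [A_eq, A_eq, iteratedDeriv_one, ← F_eq k, deriv_F _ (g_smooth k)]
  rw [show (2:ℕ) = 1+1 from rfl, iteratedDeriv_succ']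
  norm_num

lemma recn (n k : ℕ) :
    A (n+3) (k+1) = A (n+2) k - ((n:ℝ)+2)*((n:ℝ)+1) * A (n+1) (k+1) := by
  have h := leibniz (deriv (f (k+1))) (g_smooth k) n 0
  rw [F_eq k] at h
  rw [A_eq (n+2) k, h]
  have e1 : ∀ m : ℕ, iteratedDeriv m (deriv (f (k+1))) 0 = A (m+1) (k+1) := by
    intro m; rw [A_eq, iteratedDeriv_succ']
  rw [e1, e1, e1]
  norm_num

lemma A00 : A 0 0 = 1 := by
  rw [A_eq, iteratedDeriv_zero]
  simp [f]

lemma A0succ (k : ℕ) : A 0 (k+1) = 0 := by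
  rw [A_eq, iteratedDeriv_zero]
  simp [f, Real.arctan_zero]

lemma iteratedDeriv_const' : ∀ (n : ℕ) (c : ℝ), iteratedDeriv (n+1) (fun _ : ℝ => c) = fun _ => 0 := by
  intro n
  induction n with
  | zero => intro c; funext z; rw [iteratedDeriv_one]; simp
  | succ n ih =>
    intro c
    rw [iteratedDeriv_succ']
    have : deriv (fun _ : ℝ => c) = fun _ : ℝ => (0:ℝ) := by funext z; simp
    rw [this, ih 0]

lemma Aconst (n : ℕ) : A (n+1) 0 = 0 := by
  rw [A_eq]
  have : f 0 = fun _ : ℝ => (1:ℝ) := by funext z; simp [f]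
  rw [this, iteratedDeriv_const']

lemma Avan : ∀ n k : ℕ, n < k → A n k = 0 := by
  intro n
  induction n using Nat.strong_induction_on with
  | _ n ih =>
    match n with
    | 0 =>
      intro k hk
      match k, hk with
      | (j+1), _ => exact A0succ j
    | 1 =>
      intro k hk
      match k, hk with
      | (j+2), _ => rw [rec0 (j+1)]; exact ih 0 (by omega) (j+1) (by omega)
    | 2 =>
      intro k hk
      match k, hk with
      | (j+3), _ => rw [rec1 (j+2)]; exact ih 1 (by omega) (j+2) (by omega)
    | (n+3) =>
      intro k hk
      match k, hk with
      | (j+1), hk =>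
        rw [recn n j, ih (n+2) (by omega) j (by omega),
          ih (n+1) (by omega) (j+1) (by omega)]
        ring

noncomputable def Spoly (m : ℕ) : Polynomial ℝ :=
  ∑ j ∈ Finset.range m, Polynomial.C (A m (j+1)) * P j

noncomputable def eps (m : ℕ) : ℝ := if Even m then (-1:ℝ)^(m/2) else 0

lemma eps_flip (n : ℕ) : eps (n+3) = - eps (n+1) := by
  unfold eps
  by_cases h : Even (n+1)
  · have h3 : Even (n+3) := by
      rw [Nat.even_iff] at h ⊢; omega
    rw [if_pos h3, if_pos h]
    have hdiv : (n+3)/2 = (n+1)/2 + 1 := by omega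
    rw [hdiv, pow_succ]; ring
  · have h3 : ¬ Even (n+3) := by
      rw [Nat.even_iff] at h ⊢; omega
    rw [if_neg h3, if_neg h, neg_zero]

lemma eps1 : eps 1 = 0 := by simp [eps]
lemma eps2 : eps 2 = -1 := by simp [eps]

lemma key1 : Spoly 1 = Polynomial.C ((Nat.factorial 0 : ℝ)) * (Polynomial.X ^ 1 - Polynomial.C (eps 1)) := by
  have hA : A 1 1 = 1 := by rw [rec0 0, A00]
  simp [Spoly, hA, eps1, P]

lemma key2 : Spoly 2 = Polynomial.C ((Nat.factorial 1 : ℝ)) * (Polynomial.X ^ 2 - Polynomial.C (eps 2)) := by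
  have hA1 : A 2 1 = 0 := by rw [rec1 0]; exact Aconst 0
  have hA2 : A 2 2 = 1 := by rw [rec1 1, rec0 0, A00]
  rw [Spoly, Finset.sum_range_succ, Finset.sum_range_succ, Finset.sum_range_zero]
  simp [hA1, hA2, eps2, P]
  ring

lemma deriv_Spoly (m : ℕ) :
    Polynomial.derivative (Spoly m) = ∑ j ∈ Finset.range m, Polynomial.C (A m (j+1)) * Polynomial.derivative (P j) := by
  rw [Spoly, map_sum]
  refine Finset.sum_congr rfl fun j _ => ?_
  rw [Polynomial.derivative_C_mul]

lemma keystep (n : ℕ)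
    (h1 : Spoly (n+1) = Polynomial.C ((Nat.factorial n : ℝ)) * (Polynomial.X ^ (n+1) - Polynomial.C (eps (n+1))))
    (h2 : Spoly (n+2) = Polynomial.C ((Nat.factorial (n+1) : ℝ)) * (Polynomial.X ^ (n+2) - Polynomial.C (eps (n+2)))) :
    Spoly (n+3) = Polynomial.C ((Nat.factorial (n+2) : ℝ)) * (Polynomial.X ^ (n+3) - Polynomial.C (eps (n+3))) := by
  have expand : Spoly (n+3)
      = (∑ j ∈ Finset.range (n+3), Polynomial.C (A (n+2) j) * P j)
        - Polynomial.C (((n:ℝ)+2)*((n:ℝ)+1)) *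
          (∑ j ∈ Finset.range (n+3), Polynomial.C (A (n+1) (j+1)) * P j) := by
    rw [Spoly, Finset.mul_sum, ← Finset.sum_sub_distrib]
    refine Finset.sum_congr rfl fun j _ => ?_
    rw [recn n j]
    rw [map_sub, map_mul]
    ring
  -- second sum equals Spoly (n+1)
  have hsum2 : (∑ j ∈ Finset.range (n+3), Polynomial.C (A (n+1) (j+1)) * P j) = Spoly (n+1) := by
    rw [Finset.sum_range_succ, Finset.sum_range_succ,
      Avan (n+1) (n+3) (by omega), Avan (n+1) (n+2) (by omega)]
    simp [Spoly]
  -- first sum equals (1+X^2) * derivative (Spoly (n+2))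
  have hsum1 : (∑ j ∈ Finset.range (n+3), Polynomial.C (A (n+2) j) * P j)
      = (1 + Polynomial.X ^ 2) * Polynomial.derivative (Spoly (n+2)) := by
    rw [Finset.sum_range_succ' (fun j => Polynomial.C (A (n+2) j) * P j) (n+2)]
    rw [Aconst (n+1)]
    simp only [map_zero, zero_mul, add_zero]
    rw [deriv_Spoly, Finset.mul_sum]
    refine Finset.sum_congr rfl fun j _ => ?_
    show Polynomial.C (A (n+2) (j+1)) * P (j+1) = _
    rw [show P (j+1) = (1 + Polynomial.X ^ 2) * Polynomial.derivative (P j) from rfl]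
    ring
  rw [expand, hsum1, hsum2, h1, h2]
  rw [Polynomial.derivative_C_mul, Polynomial.derivative_sub, Polynomial.derivative_C,
    Polynomial.derivative_X_pow, eps_flip]
  have hfac2 : (Nat.factorial (n+2) : ℝ) = ((n:ℝ)+2) * ((n:ℝ)+1) * (Nat.factorial n : ℝ) := by
    rw [Nat.factorial_succ, Nat.factorial_succ]; push_cast; ring
  have hfac1 : (Nat.factorial (n+1) : ℝ) = ((n:ℝ)+1) * (Nat.factorial n : ℝ) := by
    rw [Nat.factorial_succ]; push_cast; ring
  apply Polynomial.funext
  intro r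
  simp only [Polynomial.eval_mul, Polynomial.eval_add, Polynomial.eval_sub, Polynomial.eval_pow,
    Polynomial.eval_C, Polynomial.eval_X, Polynomial.eval_one, Polynomial.eval_zero]
  rw [hfac2, hfac1]
  push_cast
  ring

lemma key : ∀ m : ℕ, Spoly (m+1) = Polynomial.C ((Nat.factorial m : ℝ)) * (Polynomial.X ^ (m+1) - Polynomial.C (eps (m+1))) := by
  have H : ∀ n : ℕ,
      (Spoly (n+1) = Polynomial.C ((Nat.factorial n : ℝ)) * (Polynomial.X ^ (n+1) - Polynomial.C (eps (n+1)))) ∧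
      (Spoly (n+2) = Polynomial.C ((Nat.factorial (n+1) : ℝ)) * (Polynomial.X ^ (n+2) - Polynomial.C (eps (n+2)))) := by
    intro n
    induction n with
    | zero => exact ⟨key1, key2⟩
    | succ n ih => exact ⟨ih.2, keystep n ih.1 ih.2⟩
  exact fun m => (H m).1

theorem stmt_13 (m : ℕ) (hm : 1 ≤ m) (x : ℝ) :
    x ^ m =
      (1 / (Nat.factorial (m - 1) : ℝ)) *
          (∑ k ∈ Finset.Icc 1 m, A m k * (P (k - 1)).eval x) +
        (if Even m then (-1 : ℝ) ^ (m / 2) else 0) := by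
  obtain ⟨t, rfl⟩ : ∃ t, m = t + 1 := ⟨m - 1, by omega⟩
  have hsum : (∑ k ∈ Finset.Icc 1 (t+1), A (t+1) k * (P (k - 1)).eval x)
      = (Spoly (t+1)).eval x := by
    rw [Spoly, Polynomial.eval_finset_sum]
    rw [← Finset.Ico_add_one_right_eq_Icc, Finset.sum_Ico_eq_sum_range]
    simp only [Nat.add_sub_cancel, Polynomial.eval_mul, Polynomial.eval_C]
    refine Finset.sum_congr rfl fun j _ => ?_
    rw [show 1 + j - 1 = j by omega, show 1 + j = j + 1 by omega]
  have hkey := key t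
  have heval : (Spoly (t+1)).eval x = (Nat.factorial t : ℝ) * (x ^ (t+1) - eps (t+1)) := by
    rw [hkey]; simp
  rw [hsum, heval, Nat.add_sub_cancel]
  have hf : (Nat.factorial t : ℝ) ≠ 0 := Nat.cast_ne_zero.mpr (Nat.factorial_ne_zero t)
  have heps : (if Even (t+1) then (-1 : ℝ) ^ ((t+1) / 2) else 0) = eps (t+1) := rfl
  rw [heps]
  field_simp
  ring
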